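/- Every accumulation point f* of a sequence (f^k) generated by the algorithm, starting from a nonzero mean-zero f^0, is a critical point of the energy E, i.e., 0 ∈ ∂T(f*) − E(f*)·∂B(f*). -/

import Mathlib

open Finset Filter Topology

noncomputable def meanV {n : ℕ} (f : Fin n → ℝ) : ℝ := (∑ i, f i) / n
noncomputable def TVfun {n : ℕ} (w : Fin n → Fin n → ℝ) (f : Fin n → ℝ) : ℝ :=
  (1/2) * ∑ i, ∑ j, w i j * |f i - f j|
noncomputable def Bfun {n : ℕ} (f : Fin n → ℝ) : ℝ := ∑ i, |f i - meanV f|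
noncomputable def Efun {n : ℕ} (w : Fin n → Fin n → ℝ) (f : Fin n → ℝ) : ℝ :=
  TVfun w f / Bfun f
noncomputable def norm2 {n : ℕ} (f : Fin n → ℝ) : ℝ := Real.sqrt (∑ i, (f i)^2)
noncomputable def dotV {n : ℕ} (u v : Fin n → ℝ) : ℝ := ∑ i, u i * v i
def IsSubgradient {n : ℕ} (F : (Fin n → ℝ) → ℝ) (f v : Fin n → ℝ) : Prop :=
  ∀ y, F f + dotV v (y - f) ≤ F y
def GraphConnected {n : ℕ} (w : Fin n → Fin n → ℝ) : Prop :=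
  ∀ i j : Fin n, Relation.ReflTransGen (fun a b => 0 < w a b) i j
def Nonconstant {n : ℕ} (f : Fin n → ℝ) : Prop := ∃ i j, f i ≠ f j
def signSet (t : ℝ) : Set ℝ := if t > 0 then {1} else if t < 0 then {-1} else Set.Icc (-1) 1
noncomputable def P0 {n : ℕ} (f : Fin n → ℝ) : Fin n → ℝ := fun i => f i - meanV f

section aux
variable {n : ℕ}

noncomputable def Q (x : Fin n → ℝ) : ℝ := ∑ i, (x i)^2

lemma Q_nonneg (x : Fin n → ℝ) : 0 ≤ Q x :=
  Finset.sum_nonneg fun i _ => sq_nonneg _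

lemma norm2_sq (x : Fin n → ℝ) : norm2 x ^ 2 = Q x :=
  Real.sq_sqrt (Q_nonneg x)

lemma norm2_nonneg (x : Fin n → ℝ) : 0 ≤ norm2 x := Real.sqrt_nonneg _

lemma Q_eq_zero {x : Fin n → ℝ} (hx : Q x = 0) : x = 0 := by
  funext i
  have := (Finset.sum_eq_zero_iff_of_nonneg (fun i _ => sq_nonneg (x i))).1 hx i (mem_univ i)
  simpa [pow_eq_zero_iff] using this

lemma dotV_comm (x y : Fin n → ℝ) : dotV x y = dotV y x := by
  simp [dotV, mul_comm]

lemma dotV_self (x : Fin n → ℝ) : dotV x x = Q x := by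
  simp [dotV, Q, sq]

lemma Q_sub (x y : Fin n → ℝ) : Q (x - y) = Q x - 2 * dotV x y + Q y := by
  simp only [Q, dotV, Pi.sub_apply, Finset.mul_sum, ← Finset.sum_add_distrib,
    ← Finset.sum_sub_distrib]
  exact Finset.sum_congr rfl fun i _ => by ring

lemma dotV_add_right (x y z : Fin n → ℝ) : dotV x (y + z) = dotV x y + dotV x z := by
  simp only [dotV, Pi.add_apply, ← Finset.sum_add_distrib]
  exact Finset.sum_congr rfl fun i _ => by ring

lemma dotV_sub_right (x y z : Fin n → ℝ) : dotV x (y - z) = dotV x y - dotV x z := by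
  simp only [dotV, Pi.sub_apply, ← Finset.sum_sub_distrib]
  exact Finset.sum_congr rfl fun i _ => by ring

lemma dotV_smul_right (t : ℝ) (x y : Fin n → ℝ) : dotV x (t • y) = t * dotV x y := by
  simp only [dotV, Pi.smul_apply, smul_eq_mul, Finset.mul_sum]
  exact Finset.sum_congr rfl fun i _ => by ring

lemma abs_le_norm2 (x : Fin n → ℝ) (i : Fin n) : |x i| ≤ norm2 x := by
  rw [← Real.sqrt_sq_eq_abs]
  exact Real.sqrt_le_sqrt (Finset.single_le_sum (f := fun j => (x j)^2)
    (fun j _ => sq_nonneg _) (mem_univ i))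

lemma n_mul_meanV (x : Fin n → ℝ) : (n : ℝ) * meanV x = ∑ i, x i := by
  rcases Nat.eq_zero_or_pos n with h | h
  · subst h; simp [meanV]
  · rw [meanV, mul_div_cancel₀]
    exact_mod_cast h.ne'

lemma meanV_add (x y : Fin n → ℝ) : meanV (x + y) = meanV x + meanV y := by
  simp [meanV, Finset.sum_add_distrib, add_div]

lemma meanV_smul (t : ℝ) (x : Fin n → ℝ) : meanV (t • x) = t * meanV x := by
  simp [meanV, ← Finset.mul_sum, mul_div_assoc]

lemma meanV_sub (x y : Fin n → ℝ) : meanV (x - y) = meanV x - meanV y := by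
  simp [meanV, Finset.sum_sub_distrib, sub_div]

end aux

section funs
variable {n : ℕ}

lemma Bfun_nonneg (x : Fin n → ℝ) : 0 ≤ Bfun x :=
  Finset.sum_nonneg fun i _ => abs_nonneg _

lemma Bfun_smul {t : ℝ} (ht : 0 ≤ t) (x : Fin n → ℝ) : Bfun (t • x) = t * Bfun x := by
  simp only [Bfun, meanV_smul, Pi.smul_apply, smul_eq_mul, Finset.mul_sum]
  exact Finset.sum_congr rfl fun i _ => by
    rw [← mul_sub, abs_mul, abs_of_nonneg ht]

lemma Bfun_pos {x : Fin n → ℝ} (hm : meanV x = 0) (hx : x ≠ 0) : 0 < Bfun x := by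
  rcases (Bfun_nonneg x).lt_or_eq with hlt | heq
  · exact hlt
  · exfalso; apply hx; funext i
    have h0 := (Finset.sum_eq_zero_iff_of_nonneg
      (fun i _ => abs_nonneg (x i - meanV x))).1 heq.symm i (mem_univ i)
    have := abs_eq_zero.1 h0
    rw [hm, sub_zero] at this
    simpa using this

lemma Bfun_lip (x d : Fin n → ℝ) : Bfun (x + d) ≤ Bfun x + 2 * ∑ i, |d i| := by
  have key : ∀ i : Fin n, |(x + d) i - meanV (x + d)| ≤ |x i - meanV x| + (|d i| + |meanV d|) := by
    intro i
    rw [meanV_add, Pi.add_apply]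
    have : x i + d i - (meanV x + meanV d) = (x i - meanV x) + (d i - meanV d) := by ring
    rw [this]
    calc |(x i - meanV x) + (d i - meanV d)| ≤ |x i - meanV x| + |d i - meanV d| := abs_add_le _ _
      _ ≤ |x i - meanV x| + (|d i| + |meanV d|) := by
          gcongr; exact abs_sub _ _
  calc Bfun (x + d) ≤ ∑ i, (|x i - meanV x| + (|d i| + |meanV d|)) :=
        Finset.sum_le_sum fun i _ => key i
    _ = Bfun x + (∑ i, |d i| + n * |meanV d|) := by
        simp [Bfun, Finset.sum_add_distrib, Finset.card_univ, nsmul_eq_mul]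
    _ ≤ Bfun x + 2 * ∑ i, |d i| := by
        have h1 : (n : ℝ) * |meanV d| ≤ ∑ i, |d i| := by
          rw [← abs_of_nonneg (Nat.cast_nonneg (α := ℝ) n), ← abs_mul, n_mul_meanV]
          exact Finset.abs_sum_le_sum_abs _ _
        linarith
  
lemma Bfun_translate (x : Fin n → ℝ) (t : ℝ) : Bfun (x + t • (fun _ => (1:ℝ))) = Bfun x := by
  rcases Nat.eq_zero_or_pos n with h | h
  · subst h; simp [Bfun]
  · have h1 : meanV (fun _ : Fin n => (1:ℝ)) = 1 := by
      simp only [meanV, Finset.sum_const, Finset.card_univ, Fintype.card_fin, nsmul_eq_mul,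
        mul_one]
      exact div_self (by exact_mod_cast h.ne')
    simp only [Bfun, meanV_add, meanV_smul, h1, mul_one, Pi.add_apply, Pi.smul_apply,
      smul_eq_mul]
    apply Finset.sum_congr rfl; intro i _; congr 1; ring

lemma Bfun_continuous : Continuous (Bfun (n := n)) := by
  unfold Bfun meanV
  apply continuous_finset_sum
  intro i _
  apply Continuous.abs
  apply Continuous.sub (continuous_apply i)
  exact (continuous_finset_sum _ fun j _ => continuous_apply j).div_const _

lemma TVfun_nonneg {w : Fin n → Fin n → ℝ} (hnn : ∀ i j, 0 ≤ w i j) (x : Fin n → ℝ) :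
    0 ≤ TVfun w x := by
  apply mul_nonneg (by norm_num)
  exact Finset.sum_nonneg fun i _ => Finset.sum_nonneg fun j _ =>
    mul_nonneg (hnn i j) (abs_nonneg _)

lemma TVfun_smul (w : Fin n → Fin n → ℝ) {t : ℝ} (ht : 0 ≤ t) (x : Fin n → ℝ) :
    TVfun w (t • x) = t * TVfun w x := by
  have key : ∀ i j : Fin n, w i j * |(t • x) i - (t • x) j| = t * (w i j * |x i - x j|) := by
    intro i j
    simp only [Pi.smul_apply, smul_eq_mul]
    rw [← mul_sub, abs_mul, abs_of_nonneg ht]; ring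
  simp only [TVfun, key, ← Finset.mul_sum]
  ring

lemma TVfun_translate (w : Fin n → Fin n → ℝ) (x : Fin n → ℝ) (t : ℝ) :
    TVfun w (x + t • (fun _ => (1:ℝ))) = TVfun w x := by
  simp [TVfun]

lemma TVfun_convex {w : Fin n → Fin n → ℝ} (hnn : ∀ i j, 0 ≤ w i j) (x y : Fin n → ℝ)
    {t : ℝ} (ht0 : 0 ≤ t) (ht1 : t ≤ 1) :
    TVfun w (x + t • (y - x)) ≤ (1 - t) * TVfun w x + t * TVfun w y := by
  simp only [TVfun]
  have expand : ∀ i j : Fin n,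
      w i j * |(x + t • (y - x)) i - (x + t • (y - x)) j|
        ≤ (1 - t) * (w i j * |x i - x j|) + t * (w i j * |y i - y j|) := by
    intro i j
    have hid : (x + t • (y - x)) i - (x + t • (y - x)) j
        = (1 - t) * (x i - x j) + t * (y i - y j) := by
      simp only [Pi.add_apply, Pi.smul_apply, Pi.sub_apply, smul_eq_mul]; ring
    rw [hid]
    calc w i j * |(1 - t) * (x i - x j) + t * (y i - y j)|
        ≤ w i j * (|(1 - t) * (x i - x j)| + |t * (y i - y j)|) := by
          exact mul_le_mul_of_nonneg_left (abs_add_le _ _) (hnn i j)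
      _ = (1 - t) * (w i j * |x i - x j|) + t * (w i j * |y i - y j|) := by
          rw [abs_mul, abs_mul, abs_of_nonneg ht0, abs_of_nonneg (by linarith : (0:ℝ) ≤ 1 - t)]
          ring
  calc (1/2 : ℝ) * ∑ i, ∑ j, w i j * |(x + t • (y - x)) i - (x + t • (y - x)) j|
      ≤ (1/2 : ℝ) * ∑ i, ∑ j, ((1 - t) * (w i j * |x i - x j|) + t * (w i j * |y i - y j|)) := by
        apply mul_le_mul_of_nonneg_left _ (by norm_num)
        exact Finset.sum_le_sum fun i _ => Finset.sum_le_sum fun j _ => expand i j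
    _ = (1 - t) * ((1/2:ℝ) * ∑ i, ∑ j, w i j * |x i - x j|)
        + t * ((1/2:ℝ) * ∑ i, ∑ j, w i j * |y i - y j|) := by
        simp only [Finset.sum_add_distrib, ← Finset.mul_sum]
        ring

lemma TVfun_continuous (w : Fin n → Fin n → ℝ) : Continuous (TVfun w) := by
  unfold TVfun
  apply Continuous.mul continuous_const
  apply continuous_finset_sum; intro i _
  apply continuous_finset_sum; intro j _
  exact continuous_const.mul ((continuous_apply i).sub (continuous_apply j)).abs

lemma TVfun_pos {w : Fin n → Fin n → ℝ} (hnn : ∀ i j, 0 ≤ w i j)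
    (hconn : GraphConnected w) {x : Fin n → ℝ} (hm : meanV x = 0) (hx : x ≠ 0) :
    0 < TVfun w x := by
  rcases (TVfun_nonneg hnn x).lt_or_eq with hlt | heq
  · exact hlt
  exfalso
  have hsum : ∑ i, ∑ j, w i j * |x i - x j| = 0 := by
    have := heq.symm
    unfold TVfun at this
    linarith
  have hterm : ∀ i j : Fin n, w i j * |x i - x j| = 0 := by
    intro i j
    have h1 := (Finset.sum_eq_zero_iff_of_nonneg (fun i _ =>
      Finset.sum_nonneg fun j _ => mul_nonneg (hnn i j) (abs_nonneg _))).1 hsum i (mem_univ i)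
    exact (Finset.sum_eq_zero_iff_of_nonneg (fun j _ =>
      mul_nonneg (hnn i j) (abs_nonneg _))).1 h1 j (mem_univ j)
  have hedge : ∀ i j : Fin n, 0 < w i j → x i = x j := by
    intro i j hw
    have := hterm i j
    rcases mul_eq_zero.1 this with h | h
    · exact absurd h hw.ne'
    · have := abs_eq_zero.1 h; linarith
  have hconst : ∀ i j : Fin n, x i = x j := by
    intro i j
    induction hconn i j with
    | refl => rfl
    | tail _ hbc ih => exact ih.trans (hedge _ _ hbc)
  apply hx
  have hn : n ≠ 0 := by
    rcases Function.ne_iff.1 hx with ⟨i, _⟩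
    exact fun h => absurd i.2 (by omega)
  funext i
  have : ∑ j, x j = (n : ℝ) * x i := by
    rw [Finset.sum_congr rfl (fun j _ => hconst j i)]
    simp [Finset.card_univ, mul_comm]
  have hm' : (n : ℝ) * meanV x = 0 := by rw [hm, mul_zero]
  rw [n_mul_meanV, this] at hm'
  have : x i = 0 := by
    rcases mul_eq_zero.1 hm' with h | h
    · exact absurd h (by exact_mod_cast hn)
    · exact h
  simpa using this

end funs

section subgrad
variable {n : ℕ}

lemma dotV_zero_right (x : Fin n → ℝ) : dotV x 0 = 0 := by simp [dotV]

lemma dotV_smul_left (t : ℝ) (x y : Fin n → ℝ) : dotV (t • x) y = t * dotV x y := by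
  rw [dotV_comm, dotV_smul_right, dotV_comm]

lemma dotV_neg_left (x y : Fin n → ℝ) : dotV (-x) y = -dotV x y := by
  simp only [dotV, Pi.neg_apply, neg_mul, Finset.sum_neg_distrib]

lemma Q_smul (a : ℝ) (x : Fin n → ℝ) : Q (a • x) = a^2 * Q x := by
  simp only [Q, Pi.smul_apply, smul_eq_mul, mul_pow, ← Finset.mul_sum]

lemma Bfun_zero : Bfun (0 : Fin n → ℝ) = 0 := by simp [Bfun, meanV]

lemma subgrad_B_dot {f v : Fin n → ℝ} (hv : IsSubgradient Bfun f v) : dotV v f = Bfun f := by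
  have h0 := hv 0
  have h2 := hv ((2:ℝ) • f)
  rw [Bfun_zero] at h0
  rw [Bfun_smul (by norm_num)] at h2
  have e0 : dotV v (0 - f) = -dotV v f := by
    rw [dotV_sub_right, dotV_zero_right, zero_sub]
  have e2 : dotV v ((2:ℝ) • f - f) = dotV v f := by
    have : (2:ℝ) • f - f = f := by funext i; simp; ring
    rw [this]
  rw [e0] at h0; rw [e2] at h2
  linarith

lemma subgrad_B_sum {f v : Fin n → ℝ} (hv : IsSubgradient Bfun f v) : ∑ i, v i = 0 := by
  have key : ∀ t : ℝ, dotV v (t • (fun _ : Fin n => (1:ℝ))) ≤ 0 := by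
    intro t
    have h := hv (f + t • (fun _ => (1:ℝ)))
    rw [Bfun_translate] at h
    have : f + t • (fun _ : Fin n => (1:ℝ)) - f = t • (fun _ => (1:ℝ)) := by
      funext i; simp
    rw [this] at h
    linarith
  have h1 := key 1
  have h2 := key (-1)
  rw [dotV_smul_right] at h1 h2
  have hd : dotV v (fun _ : Fin n => (1:ℝ)) = ∑ i, v i := by simp [dotV]
  rw [hd] at h1 h2
  linarith

lemma subgrad_B_bound {f v : Fin n → ℝ} (hv : IsSubgradient Bfun f v) (i : Fin n) :
    |v i| ≤ 2 := by
  have key : ∀ s : ℝ, v i * s ≤ 2 * |s| := by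
    intro s
    have h := hv (f + Pi.single i s)
    have hB := Bfun_lip f (Pi.single i s)
    have hsum : ∑ j, |Pi.single i s j| = |s| := by
      rw [Finset.sum_eq_single i]
      · simp
      · intro j _ hj; simp [Pi.single_apply, hj]
      · intro hj; exact absurd (mem_univ i) hj
    have hd : dotV v (f + Pi.single i s - f) = v i * s := by
      have : f + Pi.single i s - f = Pi.single i s := by funext j; simp
      rw [this, dotV]
      rw [Finset.sum_eq_single i]
      · simp
      · intro j _ hj; simp [Pi.single_apply, hj]
      · intro hj; exact absurd (mem_univ i) hj
    rw [hd] at h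
    rw [hsum] at hB
    linarith
  have hp := key 1
  have hm := key (-1)
  simp at hp hm
  rw [abs_le]; constructor <;> linarith

set_option maxHeartbeats 1000000 in
lemma subgrad_closed {F : (Fin n → ℝ) → ℝ} (hF : Continuous F)
    {x vv : ℕ → Fin n → ℝ} {x0 v0 : Fin n → ℝ}
    (hx : Tendsto x atTop (𝓝 x0)) (hvv : Tendsto vv atTop (𝓝 v0))
    (hsub : ∀ j, IsSubgradient F (x j) (vv j)) : IsSubgradient F x0 v0 := by
  intro y
  have hdot : Continuous fun p : (Fin n → ℝ) × (Fin n → ℝ) => dotV p.1 p.2 := by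
    unfold dotV
    apply continuous_finset_sum; intro i _
    exact ((continuous_apply i).comp continuous_fst).mul ((continuous_apply i).comp continuous_snd)
  have hpair : Tendsto (fun j => ((vv j, y - x j) : (Fin n → ℝ) × (Fin n → ℝ))) atTop
      (𝓝 (v0, y - x0)) := hvv.prodMk_nhds (tendsto_const_nhds.sub hx)
  have h1 : Tendsto (fun j => F (x j) + dotV (vv j) (y - x j)) atTop
      (𝓝 (F x0 + dotV v0 (y - x0))) :=
    ((hF.tendsto x0).comp hx).add ((hdot.tendsto (v0, y - x0)).comp hpair)
  exact le_of_tendsto h1 (Eventually.of_forall fun j => hsub j y)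

lemma Efun_smul (w : Fin n → Fin n → ℝ) {t : ℝ} (ht : 0 < t) (x : Fin n → ℝ) :
    Efun w (t • x) = Efun w x := by
  rw [Efun, Efun, TVfun_smul w ht.le, Bfun_smul ht.le, mul_div_mul_left _ _ ht.ne']

lemma prox_subgrad {w : Fin n → Fin n → ℝ} (hnn : ∀ i j, 0 ≤ w i j) {E c : ℝ}
    (hc : 0 < c) {g hh : Fin n → ℝ}
    (hmin : ∀ u, TVfun w hh + E * norm2 (hh - g)^2 / (2*c)
      ≤ TVfun w u + E * norm2 (u - g)^2 / (2*c)) :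
    IsSubgradient (TVfun w) hh ((E/c) • (g - hh)) := by
  intro y
  set d := y - hh with hd
  have key : ∀ t : ℝ, 0 < t → t ≤ 1 →
      0 ≤ (TVfun w y - TVfun w hh) - (E/c) * dotV (hh - g) (-d)
        + t * ((E/(2*c)) * Q d) := by
    intro t ht0 ht1
    have h1 := hmin (hh + t • d)
    have hconv := TVfun_convex hnn hh y ht0.le ht1
    rw [← hd] at hconv
    have hQ : Q (hh + t • d - g) = Q (hh - g) - 2 * (t * dotV (hh - g) (-d)) + t^2 * Q d := by
      have hmm : hh + t • d - g = (hh - g) - ((-t) • d) := by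
        funext i; simp only [Pi.add_apply, Pi.sub_apply, Pi.smul_apply, smul_eq_mul,
          neg_mul]; ring
      rw [hmm, Q_sub, Q_smul, dotV_smul_right]
      have : dotV (hh - g) (-d) = - dotV (hh - g) d := by
        have : -d = (-1 : ℝ) • d := by funext i; simp
        rw [this, dotV_smul_right]; ring
      rw [this]; ring
    rw [norm2_sq, norm2_sq, hQ] at h1
    have hEQ : 0 ≤ E * Q (hh - g) / (2*c) → True := fun _ => trivial
    have h2 : 0 ≤ t * ((TVfun w y - TVfun w hh) - (E/c) * dotV (hh - g) (-d)
        + t * ((E/(2*c)) * Q d)) := by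
      have hc2 : (0:ℝ) < 2 * c := by linarith
      have expand : E * (Q (hh - g) - 2 * (t * dotV (hh - g) (-d)) + t^2 * Q d) / (2*c)
          = E * Q (hh - g) / (2*c) - t * ((E/c) * dotV (hh - g) (-d))
            + t * (t * ((E/(2*c)) * Q d)) := by
        field_simp
      rw [expand] at h1
      nlinarith [h1, hconv]
    have := (mul_nonneg_iff_of_pos_left ht0).1 h2
    linarith
  have hlimt : Tendsto (fun j : ℕ => (TVfun w y - TVfun w hh) - (E/c) * dotV (hh - g) (-d)
      + (1/((j:ℝ)+1)) * ((E/(2*c)) * Q d)) atTop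
      (𝓝 ((TVfun w y - TVfun w hh) - (E/c) * dotV (hh - g) (-d) + 0)) := by
    apply Tendsto.add tendsto_const_nhds
    have h0 : Tendsto (fun j : ℕ => 1/((j:ℝ)+1)) atTop (𝓝 0) :=
      tendsto_one_div_add_atTop_nhds_zero_nat
    simpa using h0.mul_const ((E/(2*c)) * Q d)
  have hfinal : 0 ≤ (TVfun w y - TVfun w hh) - (E/c) * dotV (hh - g) (-d) + 0 := by
    apply ge_of_tendsto hlimt
    apply Eventually.of_forall
    intro j
    apply key
    · positivity
    · rw [div_le_one (by positivity)]; linarith [Nat.cast_nonneg (α := ℝ) j]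
  have hdot2 : dotV ((E/c) • (g - hh)) (y - hh) = (E/c) * dotV (hh - g) (-d) := by
    rw [dotV_smul_left, ← hd]
    congr 1
    have : g - hh = -(hh - g) := by funext i; simp
    rw [this, dotV_neg_left]
    have : dotV (hh - g) (-d) = - dotV (hh - g) d := by
      have h1 : -d = (-1 : ℝ) • d := by funext i; simp
      rw [h1, dotV_smul_right]; ring
    rw [this]
  rw [hdot2]
  linarith

end subgrad

section aux2
variable {n : ℕ}

lemma Q_zero : Q (0 : Fin n → ℝ) = 0 := by simp [Q]

lemma dotV_zero_left (x : Fin n → ℝ) : dotV 0 x = 0 := by simp [dotV]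

lemma TVfun_zero (w : Fin n → Fin n → ℝ) : TVfun w (0 : Fin n → ℝ) = 0 := by simp [TVfun]

lemma Q_sub_affine (u x vv : Fin n → ℝ) (c : ℝ) :
    Q (u - (x + c • vv)) = Q (u - x) - 2*c*dotV (u - x) vv + c^2 * Q vv := by
  have h1 : u - (x + c • vv) = (u - x) - c • vv := by funext i; simp; ring
  rw [h1, Q_sub, dotV_smul_right, Q_smul]; ring

lemma Q_zero_sub (x : Fin n → ℝ) : Q (0 - x) = Q x := by
  rw [Q_sub, Q_zero, dotV_zero_left]; ring

lemma Bfun_le (x : Fin n → ℝ) : Bfun x ≤ 2 * ∑ i, |x i| := by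
  have := Bfun_lip 0 x
  simpa [Bfun_zero] using this

lemma sum_abs_le_Q (x : Fin n → ℝ) : ∑ i, |x i| ≤ ((n : ℝ) + Q x) / 2 := by
  have key : ∀ i : Fin n, |x i| ≤ (1 + (x i)^2) / 2 := by
    intro i
    nlinarith [sq_nonneg (|x i| - 1), sq_abs (x i)]
  calc ∑ i, |x i| ≤ ∑ i : Fin n, (1 + (x i)^2)/2 := Finset.sum_le_sum fun i _ => key i
    _ = ((n : ℝ) + Q x) / 2 := by
      rw [Q, ← Finset.sum_div, Finset.sum_add_distrib]
      simp [Finset.card_univ]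

lemma Q_add_le (x y : Fin n → ℝ) : Q (x + y) ≤ 2 * Q x + 2 * Q y := by
  simp only [Q, Pi.add_apply, Finset.mul_sum, ← Finset.sum_add_distrib]
  exact Finset.sum_le_sum fun i _ => by nlinarith [sq_nonneg (x i - y i)]

lemma norm2_smul (a : ℝ) (x : Fin n → ℝ) : norm2 (a • x) = |a| * norm2 x := by
  have : norm2 (a • x) = Real.sqrt (Q (a • x)) := rfl
  rw [this, Q_smul, Real.sqrt_mul (sq_nonneg a), Real.sqrt_sq_eq_abs]
  rfl

lemma norm2_pos {x : Fin n → ℝ} (hx : x ≠ 0) : 0 < norm2 x := by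
  rw [norm2, Real.sqrt_pos]
  rcases (Q_nonneg x).lt_or_eq with h | h
  · exact h
  · exact absurd (Q_eq_zero h.symm) hx

lemma norm2_continuous : Continuous (norm2 (n := n)) := by
  unfold norm2
  exact Real.continuous_sqrt.comp (continuous_finset_sum _ fun i _ => (continuous_apply i).pow 2)

lemma meanV_continuous : Continuous (meanV (n := n)) := by
  unfold meanV
  exact (continuous_finset_sum _ fun i _ => continuous_apply i).div_const _

lemma Efun_continuousAt (w : Fin n → Fin n → ℝ) {x : Fin n → ℝ} (hB : Bfun x ≠ 0) :
    ContinuousAt (Efun w) x :=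
  ((TVfun_continuous w).continuousAt).div (Bfun_continuous.continuousAt) hB

end aux2

set_option maxHeartbeats 1000000 in
theorem stmt18 {n : ℕ} (w : Fin n → Fin n → ℝ)
    (hsym : ∀ i j, w i j = w j i) (hnn : ∀ i j, 0 ≤ w i j)
    (hconn : GraphConnected w) (c : ℝ) (hc : 0 < c)
    (f v h : ℕ → Fin n → ℝ)
    (hf0 : meanV (f 0) = 0) (hf0nz : f 0 ≠ 0)
    (hv : ∀ k, IsSubgradient Bfun (f k) (v k))
    (hmin : ∀ k, ∀ u : Fin n → ℝ,
      TVfun w (h k) + Efun w (f k) * norm2 (h k - (f k + c • v k))^2 / (2*c)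
        ≤ TVfun w u + Efun w (f k) * norm2 (u - (f k + c • v k))^2 / (2*c))
    (hnext : ∀ k, f (k+1) = (norm2 (h k))⁻¹ • h k)
    (fstar : Fin n → ℝ) (φ : ℕ → ℕ) (hφ : StrictMono φ)
    (hlim : Tendsto (fun k => f (φ k)) atTop (𝓝 fstar)) :
    ∃ wst vst : Fin n → ℝ, IsSubgradient (TVfun w) fstar wst ∧
      IsSubgradient Bfun fstar vst ∧ wst - Efun w fstar • vst = 0 := by
  classical
  have hn : 0 < n := by
    rcases Function.ne_iff.1 hf0nz with ⟨i, _⟩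
    have := i.2; omega
  set E : ℕ → ℝ := fun k => Efun w (f k) with hEdef
  set g : ℕ → Fin n → ℝ := fun k => f k + c • v k with hgdef
  -- cleaned minimization property
  have hmin' : ∀ k, ∀ u : Fin n → ℝ,
      2*c*TVfun w (h k) + E k * Q (h k - g k) ≤ 2*c*TVfun w u + E k * Q (u - g k) := by
    intro k u
    have h1 := hmin k u
    rw [norm2_sq, norm2_sq] at h1
    have h2c : (0:ℝ) < 2*c := by linarith
    have h3 := mul_le_mul_of_nonneg_left h1 h2c.le
    rw [mul_add, mul_add] at h3
    have e1 : 2*c*(E k * Q (h k - g k) / (2*c)) = E k * Q (h k - g k) := by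
      field_simp
    have e2 : 2*c*(E k * Q (u - g k) / (2*c)) = E k * Q (u - g k) := by
      field_simp
    rw [e1, e2] at h3
    exact h3
  -- per-step facts, assuming invariant at k
  have step : ∀ k, meanV (f k) = 0 → f k ≠ 0 → h k ≠ 0 ∧ meanV (h k) = 0 := by
    intro k hm hnz
    have hB : 0 < Bfun (f k) := Bfun_pos hm hnz
    have hT : 0 < TVfun w (f k) := TVfun_pos hnn hconn hm hnz
    have hEk : 0 < E k := div_pos hT hB
    have hEB : E k * Bfun (f k) = TVfun w (f k) := div_mul_cancel₀ _ hB.ne'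
    have hvd : dotV (v k) (f k) = Bfun (f k) := subgrad_B_dot (hv k)
    have hvs : ∑ i, v k i = 0 := subgrad_B_sum (hv k)
    have hvm : meanV (v k) = 0 := by rw [meanV, hvs, zero_div]
    have hQfg : Q (f k - g k) = c^2 * Q (v k) := by
      rw [hgdef]
      show Q (f k - (f k + c • v k)) = _
      rw [Q_sub_affine]
      have : f k - f k = 0 := by simp
      rw [this, Q_zero, dotV_zero_left]
      ring
    have hhne : h k ≠ 0 := by
      intro h0
      have h1 := hmin' k (f k)
      rw [h0, TVfun_zero, hQfg] at h1
      have hQ0g : Q (0 - g k) = Q (f k) + 2*c*Bfun (f k) + c^2 * Q (v k) := by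
        rw [Q_zero_sub, hgdef]
        show Q (f k + c • v k) = _
        have : f k + c • v k = f k - ((-c) • v k) := by
          funext i; simp only [Pi.add_apply, Pi.sub_apply, Pi.smul_apply, smul_eq_mul,
            neg_mul]; ring
        rw [this, Q_sub, dotV_smul_right, Q_smul, dotV_comm, hvd]
        ring
      rw [hQ0g] at h1
      -- h1 : 2c*0 + E*(Qf + 2cBf + c²Qv) ≤ 2cTf + E*c²Qv
      have hQf : Q (f k) ≤ 0 := by nlinarith [h1, hEB]
      exact hnz (Q_eq_zero (le_antisymm hQf (Q_nonneg _)))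
    have hgm : meanV (g k) = 0 := by
      rw [hgdef]
      show meanV (f k + c • v k) = 0
      rw [meanV_add, meanV_smul, hm, hvm]; ring
    have hmh : meanV (h k) = 0 := by
      by_contra hne
      set m := meanV (h k) with hmdef
      have h1 := hmin' k (h k + (-m) • (fun _ => (1:ℝ)))
      rw [TVfun_translate] at h1
      have hQu : Q (h k + (-m) • (fun _ => (1:ℝ)) - g k) = Q (h k - g k) - (n:ℝ) * m^2 := by
        have e1 : h k + (-m) • (fun _ => (1:ℝ)) - g k = (h k - g k) - m • (fun _ => (1:ℝ)) := by
          funext i; simp only [Pi.add_apply, Pi.sub_apply, Pi.smul_apply, smul_eq_mul,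
            neg_mul]; ring
        rw [e1, Q_sub, dotV_smul_right, Q_smul]
        have e2 : dotV (h k - g k) (fun _ => (1:ℝ)) = (n:ℝ) * m := by
          have : dotV (h k - g k) (fun _ => (1:ℝ)) = ∑ i, (h k - g k) i := by
            simp [dotV]
          rw [this, ← n_mul_meanV, meanV_sub, hgm, hmdef]; ring
        have e3 : Q (fun _ : Fin n => (1:ℝ)) = (n:ℝ) := by simp [Q]
        rw [e2, e3]; ring
      rw [hQu] at h1
      have hm2 : (n:ℝ) * m^2 ≤ 0 := by nlinarith [h1]
      have : m^2 ≤ 0 := by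
        have hnr : (0:ℝ) < n := by exact_mod_cast hn
        nlinarith
      exact hne (pow_eq_zero_iff (n := 2) (by norm_num) |>.1 (le_antisymm this (sq_nonneg m)))
    exact ⟨hhne, hmh⟩
  -- invariant
  have inv : ∀ k, meanV (f k) = 0 ∧ f k ≠ 0 := by
    intro k
    induction k with
    | zero => exact ⟨hf0, hf0nz⟩
    | succ k ih =>
      obtain ⟨hhne, hmh⟩ := step k ih.1 ih.2
      have hr : 0 < norm2 (h k) := norm2_pos hhne
      constructor
      · rw [hnext k, meanV_smul, hmh, mul_zero]
      · rw [hnext k]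
        intro h0
        apply hhne
        have : ∀ i, (norm2 (h k))⁻¹ * h k i = 0 := fun i => congrFun h0 i
        funext i
        have := this i
        have hrne : (norm2 (h k))⁻¹ ≠ 0 := inv_ne_zero hr.ne'
        simpa [hrne] using this
  have hBpos : ∀ k, 0 < Bfun (f k) := fun k => Bfun_pos (inv k).1 (inv k).2
  have hTpos : ∀ k, 0 < TVfun w (f k) := fun k => TVfun_pos hnn hconn (inv k).1 (inv k).2
  have hEpos : ∀ k, 0 < E k := fun k => div_pos (hTpos k) (hBpos k)
  have hhne : ∀ k, h k ≠ 0 := fun k => (step k (inv k).1 (inv k).2).1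
  have hmh : ∀ k, meanV (h k) = 0 := fun k => (step k (inv k).1 (inv k).2).2
  have hBh : ∀ k, 0 < Bfun (h k) := fun k => Bfun_pos (hmh k) (hhne k)
  have hnorm1 : ∀ k, norm2 (f (k+1)) = 1 := by
    intro k
    rw [hnext k, norm2_smul, abs_of_nonneg (inv_nonneg.2 (norm2_nonneg _))]
    exact inv_mul_cancel₀ (norm2_pos (hhne k)).ne'
  have hEsucc : ∀ k, E (k+1) = TVfun w (h k) / Bfun (h k) := by
    intro k
    show Efun w (f (k+1)) = _
    rw [hnext k, Efun_smul w (inv_pos.2 (norm2_pos (hhne k))), Efun]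
  -- descent inequality
  have key1 : ∀ k, 2*c*TVfun w (h k) + E k * Q (h k - f k) ≤ 2*c*(E k * Bfun (h k)) := by
    intro k
    have h1 := hmin' k (f k)
    have hQfg : Q (f k - g k) = c^2 * Q (v k) := by
      rw [hgdef]
      show Q (f k - (f k + c • v k)) = _
      rw [Q_sub_affine]
      have : f k - f k = 0 := by simp
      rw [this, Q_zero, dotV_zero_left]; ring
    have hQhg : Q (h k - g k)
        = Q (h k - f k) - 2*c*dotV (h k - f k) (v k) + c^2 * Q (v k) := by
      rw [hgdef]
      show Q (h k - (f k + c • v k)) = _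
      rw [Q_sub_affine]
    have hsub := hv k (h k)
    -- Bfun (f k) + dotV (v k) (h k - f k) ≤ Bfun (h k)
    have hEB : E k * Bfun (f k) = TVfun w (f k) := div_mul_cancel₀ _ (hBpos k).ne'
    have hdot : dotV (h k - f k) (v k) = dotV (v k) (h k - f k) := dotV_comm _ _
    rw [hQfg, hQhg, hdot] at h1
    have hmul := mul_le_mul_of_nonneg_left hsub
      (mul_nonneg (by linarith : (0:ℝ) ≤ 2*c) (hEpos k).le)
    have hEB' : 2*c*(E k * Bfun (f k)) = 2*c*TVfun w (f k) := by rw [hEB]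
    ring_nf at h1 hmul hEB' ⊢
    linarith [h1, hmul, hEB']
  have hEanti : ∀ k, E (k+1) ≤ E k := by
    intro k
    rw [hEsucc k, div_le_iff₀ (hBh k)]
    have := key1 k
    nlinarith [this, Q_nonneg (h k - f k), hEpos k]
  -- limit facts about fstar
  have hφge : ∀ k, k ≤ φ k := fun k => hφ.le_apply
  have hnormstar : norm2 fstar = 1 := by
    have h1 : Tendsto (fun k => norm2 (f (φ k))) atTop (𝓝 (norm2 fstar)) :=
      (norm2_continuous.tendsto fstar).comp hlim
    have h2 : ∀ᶠ k in atTop, norm2 (f (φ k)) = 1 := by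
      filter_upwards [eventually_ge_atTop 1] with k hk
      obtain ⟨m, hm⟩ : ∃ m, φ k = m + 1 := ⟨φ k - 1, by have := hφge k; omega⟩
      rw [hm]; exact hnorm1 m
    have h3 : Tendsto (fun _ : ℕ => (1:ℝ)) atTop (𝓝 (norm2 fstar)) := h1.congr' h2
    exact tendsto_nhds_unique h3 tendsto_const_nhds
  have hmeanstar : meanV fstar = 0 := by
    have h1 : Tendsto (fun k => meanV (f (φ k))) atTop (𝓝 (meanV fstar)) :=
      (meanV_continuous.tendsto fstar).comp hlim
    have h2 : Tendsto (fun k => meanV (f (φ k))) atTop (𝓝 0) := by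
      have : (fun k => meanV (f (φ k))) = fun _ => (0:ℝ) := by
        funext k; exact (inv (φ k)).1
      rw [this]; exact tendsto_const_nhds
    exact tendsto_nhds_unique h1 h2
  have hfstarne : fstar ≠ 0 := by
    intro h0
    rw [h0] at hnormstar
    have : norm2 (0 : Fin n → ℝ) = 0 := by simp [norm2]
    rw [this] at hnormstar; norm_num at hnormstar
  have hBstar : 0 < Bfun fstar := Bfun_pos hmeanstar hfstarne
  set Estar := Efun w fstar with hEstardef
  have hEstarpos : 0 < Estar :=
    div_pos (TVfun_pos hnn hconn hmeanstar hfstarne) hBstar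
  -- E converges to Estar and E k ≥ Estar
  have hEnonneg : ∀ k, (0:ℝ) ≤ E k := fun k => (hEpos k).le
  have hbdd : BddBelow (Set.range E) := ⟨0, by rintro x ⟨k, rfl⟩; exact hEnonneg k⟩
  have hanti : Antitone E := antitone_nat_of_succ_le hEanti
  have hEtends : Tendsto E atTop (𝓝 (⨅ k, E k)) := tendsto_atTop_ciInf hanti hbdd
  have hEsub : Tendsto (fun k => E (φ k)) atTop (𝓝 Estar) :=
    ((Efun_continuousAt w hBstar.ne').tendsto).comp hlim
  have hEinf : (⨅ k, E k) = Estar :=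
    tendsto_nhds_unique (hEtends.comp hφ.tendsto_atTop) hEsub
  have hEge : ∀ k, Estar ≤ E k := by
    intro k; rw [← hEinf]; exact ciInf_le hbdd k
  have hEtends' : Tendsto E atTop (𝓝 Estar) := hEinf ▸ hEtends
  have hdiffE : Tendsto (fun k => E k - E (k+1)) atTop (𝓝 0) := by
    have h2 : Tendsto (fun k => E (k+1)) atTop (𝓝 Estar) :=
      hEtends'.comp (tendsto_add_atTop_nat 1)
    simpa using hEtends'.sub h2
  -- uniform bound on Bfun (h k) for k ≥ 1
  set C : ℝ := (n:ℝ) + 4*(1 + 4*c*(n:ℝ) + 4*c^2*(n:ℝ)) with hCdef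
  have hCpos : 0 < C := by positivity
  have hBhC : ∀ k, norm2 (f k) = 1 → Bfun (h k) ≤ C := by
    intro k hk1
    have hQf : Q (f k) = 1 := by rw [← norm2_sq, hk1]; norm_num
    have hvb : ∀ i, |v k i| ≤ 2 := subgrad_B_bound (hv k)
    have hQv : Q (v k) ≤ 4*(n:ℝ) := by
      rw [Q]
      calc ∑ i, (v k i)^2 ≤ ∑ i : Fin n, (4:ℝ) := by
            apply Finset.sum_le_sum; intro i _
            have h2 := hvb i
            have h3 : |v k i|^2 ≤ 2^2 := pow_le_pow_left₀ (abs_nonneg _) h2 2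
            rw [sq_abs] at h3
            nlinarith [h3]
        _ = 4*(n:ℝ) := by simp [Finset.card_univ]; ring
    have hfb : ∀ i, |f k i| ≤ 1 := by
      intro i; rw [← hk1]; exact abs_le_norm2 _ i
    have hdotfv : dotV (f k) (v k) = Bfun (f k) := by
      rw [dotV_comm]; exact subgrad_B_dot (hv k)
    have hBf : Bfun (f k) ≤ 2*(n:ℝ) := by
      calc Bfun (f k) ≤ 2 * ∑ i, |f k i| := Bfun_le _
        _ ≤ 2 * ∑ i : Fin n, (1:ℝ) := by
            apply mul_le_mul_of_nonneg_left (Finset.sum_le_sum fun i _ => hfb i) (by norm_num)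
        _ = 2*(n:ℝ) := by simp [Finset.card_univ]
    have hQg : Q (g k) ≤ 1 + 4*c*(n:ℝ) + 4*c^2*(n:ℝ) := by
      have : Q (g k) = Q (f k) + 2*c*dotV (f k) (v k) + c^2 * Q (v k) := by
        rw [hgdef]
        show Q (f k + c • v k) = _
        have e : f k + c • v k = f k - ((-c) • v k) := by
          funext i; simp only [Pi.add_apply, Pi.sub_apply, Pi.smul_apply, smul_eq_mul,
            neg_mul]; ring
        rw [e, Q_sub, dotV_smul_right, Q_smul]; ring
      rw [this, hQf, hdotfv]
      nlinarith [hBf, hQv, hBpos k]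
    have hQhgle : Q (h k - g k) ≤ Q (g k) := by
      have h1 := hmin' k 0
      rw [TVfun_zero, Q_zero_sub] at h1
      have hTh : 0 ≤ TVfun w (h k) := TVfun_nonneg hnn _
      nlinarith [h1, hEpos k]
    have hQh : Q (h k) ≤ 4 * Q (g k) := by
      have e : h k = (h k - g k) + g k := by funext i; simp
      calc Q (h k) = Q ((h k - g k) + g k) := by rw [← e]
        _ ≤ 2 * Q (h k - g k) + 2 * Q (g k) := Q_add_le _ _
        _ ≤ 4 * Q (g k) := by linarith
    calc Bfun (h k) ≤ 2 * ∑ i, |h k i| := Bfun_le _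
      _ ≤ 2 * (((n:ℝ) + Q (h k)) / 2) := by
          apply mul_le_mul_of_nonneg_left (sum_abs_le_Q _) (by norm_num)
      _ = (n:ℝ) + Q (h k) := by ring
      _ ≤ C := by rw [hCdef]; nlinarith [hQh, hQg]
  -- Q (h k - f k) → 0
  have key2 : ∀ k, norm2 (f k) = 1 →
      Q (h k - f k) ≤ (2*c*C/Estar) * (E k - E (k+1)) := by
    intro k hk1
    have h1 := key1 k
    have hThEB : TVfun w (h k) = E (k+1) * Bfun (h k) := by
      rw [hEsucc k, div_mul_cancel₀ _ (hBh k).ne']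
    have h2 : E k * Q (h k - f k) ≤ 2*c*Bfun (h k)*(E k - E (k+1)) := by
      nlinarith [h1, hThEB]
    have h3 : Bfun (h k)*(E k - E (k+1)) ≤ C*(E k - E (k+1)) :=
      mul_le_mul_of_nonneg_right (hBhC k hk1) (by linarith [hEanti k])
    have h4 : Estar * Q (h k - f k) ≤ 2*c*C*(E k - E (k+1)) := by
      have h5 : Estar * Q (h k - f k) ≤ E k * Q (h k - f k) :=
        mul_le_mul_of_nonneg_right (hEge k) (Q_nonneg _)
      nlinarith [h2, h3, hc]
    rw [div_mul_eq_mul_div, le_div_iff₀ hEstarpos]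
    nlinarith [h4]
  have hQto0 : Tendsto (fun k => Q (h k - f k)) atTop (𝓝 0) := by
    apply squeeze_zero' (g := fun k => (2*c*C/Estar) * (E k - E (k+1)))
    · exact Eventually.of_forall fun k => Q_nonneg _
    · filter_upwards [eventually_ge_atTop 1] with k hk
      obtain ⟨m, hm⟩ : ∃ m, k = m + 1 := ⟨k - 1, by omega⟩
      exact key2 k (by rw [hm]; exact hnorm1 m)
    · simpa using hdiffE.const_mul (2*c*C/Estar)
  have hnorm2to0 : Tendsto (fun k => norm2 (h k - f k)) atTop (𝓝 0) := by
    have : Tendsto (fun k => Real.sqrt (Q (h k - f k))) atTop (𝓝 (Real.sqrt 0)) :=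
      (Real.continuous_sqrt.tendsto 0).comp hQto0
    simpa [norm2, Q, Real.sqrt_zero] using this
  have hdto0 : Tendsto (fun k => h k - f k) atTop (𝓝 0) := by
    rw [tendsto_pi_nhds]
    intro i
    have : Tendsto (fun k => (h k - f k) i) atTop (𝓝 0) :=
      squeeze_zero_norm (fun k => abs_le_norm2 (h k - f k) i) hnorm2to0
    simpa using this
  have hhlim : Tendsto (fun k => h (φ k)) atTop (𝓝 fstar) := by
    have h1 : Tendsto (fun k => f (φ k) + (h (φ k) - f (φ k))) atTop (𝓝 (fstar + 0)) :=
      hlim.add (hdto0.comp hφ.tendsto_atTop)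
    have e : (fun k => f (φ k) + (h (φ k) - f (φ k))) = fun k => h (φ k) := by
      funext k; funext i; simp
    rw [e] at h1; simpa using h1
  -- extract convergent subsequence of v ∘ φ
  have hvbdd : ∀ k, v (φ k) ∈ Metric.closedBall (0 : Fin n → ℝ) 2 := by
    intro k
    rw [Metric.mem_closedBall, dist_zero_right]
    apply pi_norm_le_iff_of_nonneg (by norm_num) |>.2
    intro i
    simpa [Real.norm_eq_abs] using subgrad_B_bound (hv (φ k)) i
  obtain ⟨vst, -, ψ, hψ, hvst⟩ :=
    tendsto_subseq_of_bounded Metric.isBounded_closedBall hvbdd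
  -- vst is a subgradient of B at fstar
  have hvstar : IsSubgradient Bfun fstar vst :=
    subgrad_closed Bfun_continuous (hlim.comp hψ.tendsto_atTop) hvst
      (fun j => hv (φ (ψ j)))
  -- subgradients of TV at h k
  have hwk : ∀ k, IsSubgradient (TVfun w) (h k) ((E k / c) • (g k - h k)) := by
    intro k
    exact prox_subgrad hnn hc (fun u => hmin k u)
  -- limit of the TV subgradients
  have hwlim : Tendsto (fun j => ((E (φ (ψ j)) / c) • (g (φ (ψ j)) - h (φ (ψ j)))))
      atTop (𝓝 (Estar • vst)) := by
    have hs : Tendsto (fun j => E (φ (ψ j)) / c) atTop (𝓝 (Estar / c)) :=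
      ((hEsub.comp hψ.tendsto_atTop).div_const c)
    have hvec : Tendsto (fun j => g (φ (ψ j)) - h (φ (ψ j))) atTop (𝓝 (c • vst)) := by
      have e : (fun j => g (φ (ψ j)) - h (φ (ψ j)))
          = fun j => (f (φ (ψ j)) - h (φ (ψ j))) + c • v (φ (ψ j)) := by
        funext j; rw [hgdef]; funext i
        simp only [Pi.add_apply, Pi.sub_apply, Pi.smul_apply, smul_eq_mul]; ring
      rw [e]
      have h1 : Tendsto (fun j => f (φ (ψ j)) - h (φ (ψ j))) atTop (𝓝 0) := by
        have := (hlim.comp hψ.tendsto_atTop).sub (hhlim.comp hψ.tendsto_atTop)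
        simpa using this
      have h2 : Tendsto (fun j => c • v (φ (ψ j))) atTop (𝓝 (c • vst)) :=
        hvst.const_smul c
      simpa using h1.add h2
    have := hs.smul hvec
    have e2 : (Estar / c) • (c • vst) = Estar • vst := by
      rw [smul_smul, div_mul_cancel₀ _ hc.ne']
    rwa [e2] at this
  have hwstar : IsSubgradient (TVfun w) fstar (Estar • vst) :=
    subgrad_closed (TVfun_continuous w) (hhlim.comp hψ.tendsto_atTop) hwlim
      (fun j => hwk (φ (ψ j)))
  exact ⟨Estar • vst, vst, hwstar, hvstar, sub_self _⟩
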